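/- Let Γ be the Heisenberg group on A × ℤ with nondegenerate integral symplectic form, endowed with a word metric d_S for a finite generating set S. For any nontrivial (noncentral) conjugacy class 𝔎 in Γ, the counting function N_𝔎(n) = Card(𝔎 ∩ B_{d_S}(e,n)) grows quadratically: there exists c ∈ ℕ∖{0} such that n²/c ≤ N_𝔎(c·n) and N_𝔎(n) ≤ c·(c·n)² for all large n (i.e. N_𝔎(n) ≍ n²). -/

import Mathlib

/-- The Heisenberg group associated to an integral symplectic form `ω` on a free abelian
group `A`: the underlying set is `A × ℤ`, with group law
`(a,z)(a',z') = (a+a', z+z'+ω a a')`. (For an alternating form `ω`, the inverse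
`(-a, -z + ω a a)` is just `(-a, -z)`.) -/
structure Heis {A : Type*} [AddCommGroup A] (ω : A →ₗ[ℤ] A →ₗ[ℤ] ℤ) where
  fst : A
  snd : ℤ

namespace Heis

variable {A : Type*} [AddCommGroup A] {ω : A →ₗ[ℤ] A →ₗ[ℤ] ℤ}

def mul' (g h : Heis ω) : Heis ω := ⟨g.fst + h.fst, g.snd + h.snd + ω g.fst h.fst⟩

def inv' (g : Heis ω) : Heis ω := ⟨-g.fst, -g.snd + ω g.fst g.fst⟩

theorem mul'_assoc (g h k : Heis ω) : mul' (mul' g h) k = mul' g (mul' h k) := by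
  obtain ⟨a, z⟩ := g; obtain ⟨b, w⟩ := h; obtain ⟨c, u⟩ := k
  refine congrArg₂ Heis.mk ?_ ?_ <;>
    simp [mul', map_add, LinearMap.add_apply] <;> first | abel | ring | (ring_nf <;> abel)

theorem one_mul' (g : Heis ω) : mul' ⟨0, 0⟩ g = g := by
  obtain ⟨a, z⟩ := g
  refine congrArg₂ Heis.mk ?_ ?_ <;> simp [mul']

theorem mul_one' (g : Heis ω) : mul' g ⟨0, 0⟩ = g := by
  obtain ⟨a, z⟩ := g
  refine congrArg₂ Heis.mk ?_ ?_ <;> simp [mul']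

theorem inv_mul_cancel' (g : Heis ω) : mul' (inv' g) g = ⟨0, 0⟩ := by
  obtain ⟨a, z⟩ := g
  refine congrArg₂ Heis.mk ?_ ?_ <;>
    simp [mul', inv', map_neg, LinearMap.neg_apply] <;> ring

instance : Group (Heis ω) where
  mul := mul'
  one := ⟨0, 0⟩
  inv := inv'
  mul_assoc := mul'_assoc
  one_mul := one_mul'
  mul_one := mul_one'
  inv_mul_cancel := inv_mul_cancel'

theorem mul_def (g h : Heis ω) :
    g * h = ⟨g.fst + h.fst, g.snd + h.snd + ω g.fst h.fst⟩ := rfl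

theorem inv_def (g : Heis ω) : g⁻¹ = ⟨-g.fst, -g.snd + ω g.fst g.fst⟩ := rfl

end Heis


namespace HeisAux

open Heis

variable {A : Type*} [AddCommGroup A] {ω : A →ₗ[ℤ] A →ₗ[ℤ] ℤ}

theorem one_def : (1 : Heis ω) = ⟨0, 0⟩ := rfl

theorem ext' {g h : Heis ω} (h1 : g.fst = h.fst) (h2 : g.snd = h.snd) : g = h := by
  cases g; cases h; simp_all

theorem antisymm (hω : ∀ a : A, ω a a = 0) (a b : A) : ω a b = - ω b a := by
  have h := hω (a + b)
  simp [map_add, LinearMap.add_apply, hω a, hω b] at h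
  linarith

theorem fst_prod (l : List (Heis ω)) : l.prod.fst = (l.map Heis.fst).sum := by
  induction l with
  | nil => rfl
  | cons x t ih => simp [List.prod_cons, Heis.mul_def, ih]

theorem conj_eq (hω : ∀ a : A, ω a a = 0) (g h : Heis ω) :
    g * h * g⁻¹ = ⟨h.fst, h.snd + 2 * ω g.fst h.fst⟩ := by
  have ha := antisymm hω h.fst g.fst
  refine ext' ?_ ?_
  · simp [Heis.mul_def, Heis.inv_def, map_add, map_neg, LinearMap.add_apply,
      LinearMap.neg_apply, hω]
  · simp [Heis.mul_def, Heis.inv_def, map_add, map_neg, LinearMap.add_apply,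
      LinearMap.neg_apply, hω]
    linarith

theorem comm_eq (hω : ∀ a : A, ω a a = 0) (b b' : A) :
    (⟨b, 0⟩ : Heis ω) * ⟨b', 0⟩ * (⟨b, 0⟩ : Heis ω)⁻¹ * (⟨b', 0⟩ : Heis ω)⁻¹ =
      ⟨0, 2 * ω b b'⟩ := by
  have ha := antisymm hω b' b
  refine ext' ?_ ?_
  · simp [Heis.mul_def, Heis.inv_def, map_add, map_neg, LinearMap.add_apply,
      LinearMap.neg_apply, hω]
  · simp [Heis.mul_def, Heis.inv_def, map_add, map_neg, LinearMap.add_apply,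
      LinearMap.neg_apply, hω]
    linarith

theorem central_mul (a : A) (z t : ℤ) :
    (⟨a, z⟩ : Heis ω) * ⟨0, t⟩ = ⟨a, z + t⟩ := by
  refine ext' ?_ ?_ <;> simp [Heis.mul_def]

theorem pow_eq (hω : ∀ a : A, ω a a = 0) (b : A) (q : ℕ) :
    (⟨b, 0⟩ : Heis ω) ^ q = ⟨q • b, 0⟩ := by
  induction q with
  | zero => simp [one_def]
  | succ q ih =>
    rw [pow_succ, ih]
    refine ext' ?_ ?_
    · simp [Heis.mul_def, add_smul]
    · simp [Heis.mul_def, map_smul, hω]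

end HeisAux

namespace HeisAux

theorem exists_word {G : Type*} [Group G] {S : Set G} (hSgen : Subgroup.closure S = ⊤)
    (g : G) : ∃ l : List G, (∀ x ∈ l, x ∈ S ∨ x⁻¹ ∈ S) ∧ l.prod = g := by
  have hg : g ∈ (Subgroup.closure S).toSubmonoid := by rw [hSgen]; trivial
  rw [Subgroup.closure_toSubmonoid] at hg
  obtain ⟨l, hl, hp⟩ := Submonoid.exists_list_of_mem_closure hg
  refine ⟨l, fun x hx => ?_, hp⟩
  rcases hl x hx with h | h
  · exact Or.inl h
  · exact Or.inr (Set.mem_inv.mp h)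

theorem ball_finite {G : Type*} [Group G] {S : Set G} (hSfin : S.Finite)
    (ball : ℕ → Set G)
    (hball : ∀ n, ball n = {g | ∃ l : List G,
      l.length ≤ n ∧ (∀ x ∈ l, x ∈ S ∨ x⁻¹ ∈ S) ∧ l.prod = g}) :
    ∀ n, (ball n).Finite := by
  have hT : ({x : G | x ∈ S ∨ x⁻¹ ∈ S}).Finite := by
    refine (hSfin.union (hSfin.image (fun x => x⁻¹))).subset ?_
    rintro x (h | h)
    · exact Or.inl h
    · exact Or.inr ⟨x⁻¹, h, inv_inv x⟩
  intro n
  induction n with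
  | zero =>
    refine (Set.finite_singleton (1 : G)).subset ?_
    rw [hball]; rintro g ⟨l, hlen, -, hprod⟩
    have : l = [] := List.eq_nil_of_length_eq_zero (Nat.le_zero.mp hlen)
    simp [this] at hprod
    simp [← hprod]
  | succ n ih =>
    refine (ih.union (Set.Finite.image2 (· * ·) hT ih)).subset ?_
    rw [hball]
    rintro g ⟨l, hlen, hmem, hprod⟩
    match l with
    | [] =>
      refine Or.inl ?_
      rw [hball]
      exact ⟨[], by simp, by simp, by simpa using hprod⟩
    | x :: t =>
      refine Or.inr ⟨x, hmem x (by simp), t.prod, ?_, by simpa using hprod⟩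
      rw [hball]
      exact ⟨t, by simpa using hlen, fun y hy => hmem y (by simp [hy]), rfl⟩

variable {A : Type*} [AddCommGroup A] {ω : A →ₗ[ℤ] A →ₗ[ℤ] ℤ}

theorem omega_sum_bound (M : ℕ) (T : Set (Heis ω)) (x : Heis ω) (hx : x ∈ T)
    (hM : ∀ a ∈ T, ∀ b ∈ T, (ω a.fst b.fst).natAbs ≤ M) :
    ∀ l : List (Heis ω), (∀ y ∈ l, y ∈ T) →
      (ω x.fst (l.map Heis.fst).sum).natAbs ≤ l.length * M := by
  intro l
  induction l with
  | nil => simp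
  | cons y t ih =>
    intro hmem
    have h1 : ω x.fst ((y :: t).map Heis.fst).sum
        = ω x.fst y.fst + ω x.fst (t.map Heis.fst).sum := by
      simp [map_add]
    rw [h1]
    calc (ω x.fst y.fst + ω x.fst (t.map Heis.fst).sum).natAbs
        ≤ (ω x.fst y.fst).natAbs + (ω x.fst (t.map Heis.fst).sum).natAbs :=
          Int.natAbs_add_le _ _
      _ ≤ M + t.length * M := by
          exact Nat.add_le_add (hM x hx y (hmem y (by simp)))
            (ih fun z hz => hmem z (by simp [hz]))
      _ ≤ (y :: t).length * M := by simp [Nat.succ_mul]; omega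

theorem prod_snd_bound (M M₂ : ℕ) (T : Set (Heis ω))
    (hM : ∀ a ∈ T, ∀ b ∈ T, (ω a.fst b.fst).natAbs ≤ M)
    (hM₂ : ∀ x ∈ T, x.snd.natAbs ≤ M₂) :
    ∀ l : List (Heis ω), (∀ x ∈ l, x ∈ T) →
      (l.prod.snd).natAbs ≤ l.length * M₂ + l.length * l.length * M := by
  intro l
  induction l with
  | nil => simp [one_def]
  | cons x t ih =>
    intro hmem
    have hx : x ∈ T := hmem x (by simp)
    have hmt : ∀ y ∈ t, y ∈ T := fun y hy => hmem y (by simp [hy])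
    have h1 : ((x :: t).prod).snd = x.snd + t.prod.snd + ω x.fst (t.map Heis.fst).sum := by
      rw [List.prod_cons, Heis.mul_def, fst_prod]
    rw [h1]
    have h2 := ih hmt
    have h3 := omega_sum_bound M T x hx hM t hmt
    have h4 := hM₂ x hx
    have h5 : (x.snd + t.prod.snd + ω x.fst (t.map Heis.fst).sum).natAbs
        ≤ x.snd.natAbs + (t.prod.snd).natAbs + (ω x.fst (t.map Heis.fst).sum).natAbs :=
      le_trans (Int.natAbs_add_le _ _) (by gcongr; exact Int.natAbs_add_le _ _)
    have h6 : (x :: t).length = t.length + 1 := rfl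
    rw [h6]
    nlinarith [h2, h3, h4, h5]

end HeisAux

namespace HeisAux

theorem pow_word {G : Type*} [Group G] {S : Set G} (u : List G)
    (hu : ∀ x ∈ u, x ∈ S ∨ x⁻¹ ∈ S) (m : ℕ) :
    ∃ w : List G, w.length = m * u.length ∧ (∀ x ∈ w, x ∈ S ∨ x⁻¹ ∈ S) ∧
      w.prod = u.prod ^ m := by
  refine ⟨(List.replicate m u).flatten, ?_, ?_, ?_⟩
  · simp [List.length_flatten, List.map_replicate, List.sum_replicate, smul_eq_mul]
  · intro x hx
    obtain ⟨l, hl, hxl⟩ := List.mem_flatten.mp hx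
    exact hu x ((List.eq_of_mem_replicate hl) ▸ hxl)
  · rw [List.prod_flatten, List.map_replicate, List.prod_replicate]

theorem comm_word {G : Type*} [Group G] {S : Set G} (u v : List G)
    (hu : ∀ x ∈ u, x ∈ S ∨ x⁻¹ ∈ S) (hv : ∀ x ∈ v, x ∈ S ∨ x⁻¹ ∈ S) :
    ∃ w : List G, w.length = 2 * u.length + 2 * v.length ∧
      (∀ x ∈ w, x ∈ S ∨ x⁻¹ ∈ S) ∧
      w.prod = u.prod * v.prod * u.prod⁻¹ * v.prod⁻¹ := by
  have hinv : ∀ (l : List G), (∀ x ∈ l, x ∈ S ∨ x⁻¹ ∈ S) →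
      ∀ x ∈ (l.map fun y => y⁻¹).reverse, x ∈ S ∨ x⁻¹ ∈ S := by
    intro l hl x hx
    rw [List.mem_reverse, List.mem_map] at hx
    obtain ⟨y, hy, rfl⟩ := hx
    rcases hl y hy with h | h
    · exact Or.inr (by simpa using h)
    · exact Or.inl h
  refine ⟨u ++ v ++ (u.map fun y => y⁻¹).reverse ++ (v.map fun y => y⁻¹).reverse,
    by simp; ring, ?_, ?_⟩
  · intro x hx
    simp only [List.mem_append] at hx
    rcases hx with ((hx | hx) | hx) | hx
    exacts [hu x hx, hv x hx, hinv u hu x hx, hinv v hv x hx]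
  · simp only [List.prod_append, ← List.prod_inv_reverse]

end HeisAux

/-- Proposition 2.3: in the Heisenberg group `Γ = A × ℤ` over a nondegenerate alternating
integral bilinear form on a free abelian group `A` of rank `2k`, endowed with the word metric
of a finite generating set `S`, the counting function
`N_𝔎(n) = Card (𝔎 ∩ B_{d_S}(e, n))` of any nontrivial (noncentral) conjugacy class `𝔎`
grows quadratically: `N_𝔎 ≍ n²`, i.e. there is `c ∈ ℕ ∖ {0}` with `n² ≤ N_𝔎(c n)` and
`N_𝔎(n) ≤ (c n)²` for all `n`. -/
theorem heisenberg_conjugacy_class_quadratic_growth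
    {A : Type*} [AddCommGroup A] [Module.Free ℤ A] [Module.Finite ℤ A]
    (k : ℕ) (hrank : Module.finrank ℤ A = 2 * k)
    (ω : A →ₗ[ℤ] A →ₗ[ℤ] ℤ) (hω : ∀ a : A, ω a a = 0)
    (hnd : ∀ a : A, a ≠ 0 → ∃ b : A, ω a b ≠ 0)
    (S : Set (Heis ω)) (hSfin : S.Finite) (hSgen : Subgroup.closure S = ⊤)
    (γ₀ : Heis ω) (hγ₀ : γ₀.fst ≠ 0)
    (ball : ℕ → Set (Heis ω))
    (hball : ∀ n : ℕ, ball n = {g : Heis ω | ∃ l : List (Heis ω),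
      l.length ≤ n ∧ (∀ x ∈ l, x ∈ S ∨ x⁻¹ ∈ S) ∧ l.prod = g})
    (N : ℕ → ℕ)
    (hN : ∀ n : ℕ, N n = ({γ : Heis ω | IsConj γ₀ γ} ∩ ball n).ncard) :
    ∃ c : ℕ, 0 < c ∧ ∀ n : ℕ, n ^ 2 ≤ N (c * n) ∧ N n ≤ (c * n) ^ 2 := by
  classical
  obtain ⟨b₁, hb₁⟩ := hnd γ₀.fst hγ₀
  set d : ℤ := ω b₁ γ₀.fst with hd
  have hdne : d ≠ 0 := by
    rw [hd, HeisAux.antisymm hω]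
    simpa using hb₁
  set T : Set (Heis ω) := {x : Heis ω | x ∈ S ∨ x⁻¹ ∈ S} with hTdef
  have hT : T.Finite := by
    refine (hSfin.union (hSfin.image fun x => x⁻¹)).subset ?_
    rintro x (h | h)
    · exact Or.inl h
    · exact Or.inr ⟨x⁻¹, h, inv_inv x⟩
  have hballfin := HeisAux.ball_finite hSfin ball hball
  obtain ⟨M, hM⟩ : ∃ M : ℕ, ∀ a ∈ T, ∀ b ∈ T, (ω a.fst b.fst).natAbs ≤ M := by
    obtain ⟨M, hMub⟩ := (((hT.prod hT).image
      fun p : Heis ω × Heis ω => (ω p.1.fst p.2.fst).natAbs)).bddAbove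
    exact ⟨M, fun a ha b hb => hMub ⟨⟨a, b⟩, ⟨ha, hb⟩, rfl⟩⟩
  obtain ⟨M₂, hM₂⟩ : ∃ M₂ : ℕ, ∀ x ∈ T, x.snd.natAbs ≤ M₂ := by
    obtain ⟨M₂, h⟩ := (hT.image fun x => x.snd.natAbs).bddAbove
    exact ⟨M₂, fun x hx => h ⟨x, hx, rfl⟩⟩
  obtain ⟨lγ, hlγT, hlγ⟩ := HeisAux.exists_word hSgen γ₀
  obtain ⟨la, hlaT, hla⟩ := HeisAux.exists_word hSgen (⟨γ₀.fst, 0⟩ : Heis ω)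
  obtain ⟨lb, hlbT, hlb⟩ := HeisAux.exists_word hSgen (⟨b₁, 0⟩ : Heis ω)
  set c : ℕ := lγ.length + 4 * la.length + 4 * lb.length + 2 * M₂ + 2 * M + 2 with hc
  have hfst : ∀ γ : Heis ω, IsConj γ₀ γ → γ.fst = γ₀.fst := by
    intro γ hγ
    obtain ⟨u, hu⟩ := isConj_iff.mp hγ
    rw [← hu, HeisAux.conj_eq hω]
  have hcpos : 0 < c := by omega
  refine ⟨c, hcpos, fun n => ⟨?_, ?_⟩⟩
  · -- lower bound
    rcases Nat.eq_zero_or_pos n with rfl | hn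
    · simp
    set κ : ℕ → Heis ω := fun j => (⟨γ₀.fst, γ₀.snd + 2 * j * d⟩ : Heis ω) with hκ
    have hκconj : ∀ j : ℕ, IsConj γ₀ (κ j) := by
      intro j
      refine isConj_iff.mpr ⟨⟨j • b₁, 0⟩, ?_⟩
      rw [HeisAux.conj_eq hω]
      refine HeisAux.ext' rfl ?_
      show γ₀.snd + 2 * ω ((⟨j • b₁, 0⟩ : Heis ω).fst) γ₀.fst = γ₀.snd + 2 * (j : ℤ) * d
      show γ₀.snd + 2 * ω (j • b₁) γ₀.fst = γ₀.snd + 2 * (j : ℤ) * d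
      rw [map_nsmul, LinearMap.smul_apply, nsmul_eq_mul, ← hd]
      ring
    have hκball : ∀ j < n ^ 2, κ j ∈ ball (c * n) := by
      intro j hj
      set q := j / n with hq
      set r := j % n with hr
      have hqn : q < n := Nat.div_lt_iff_lt_mul hn |>.mpr (by rw [← pow_two]; exact hj)
      have hrn : r < n := Nat.mod_lt j hn
      obtain ⟨wb1, hwb1len, hwb1T, hwb1prod⟩ := HeisAux.pow_word lb hlbT q
      obtain ⟨wa1, hwa1len, hwa1T, hwa1prod⟩ := HeisAux.pow_word la hlaT n
      obtain ⟨w1, hw1len, hw1T, hw1prod⟩ := HeisAux.comm_word wb1 wa1 hwb1T hwa1T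
      obtain ⟨wb2, hwb2len, hwb2T, hwb2prod⟩ := HeisAux.pow_word lb hlbT r
      obtain ⟨w2, hw2len, hw2T, hw2prod⟩ := HeisAux.comm_word wb2 la hwb2T hlaT
      rw [hball]
      refine ⟨lγ ++ w1 ++ w2, ?_, ?_, ?_⟩
      · have h1 : (lγ ++ w1 ++ w2).length
            = lγ.length + (2 * (q * lb.length) + 2 * (n * la.length))
              + (2 * (r * lb.length) + 2 * la.length) := by
          simp [hw1len, hw2len, hwb1len, hwa1len, hwb2len]
          omega
        rw [h1]
        have h2 : q * lb.length ≤ n * lb.length := Nat.mul_le_mul_right _ hqn.le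
        have h3 : r * lb.length ≤ n * lb.length := Nat.mul_le_mul_right _ hrn.le
        have h4 : lγ.length * 1 ≤ lγ.length * n := Nat.mul_le_mul_left _ hn
        have h5 : la.length * 1 ≤ la.length * n := Nat.mul_le_mul_left _ hn
        rw [hc]
        nlinarith [h2, h3, h4, h5]
      · intro x hx
        simp only [List.mem_append] at hx
        rcases hx with (hx | hx) | hx
        exacts [hlγT x hx, hw1T x hx, hw2T x hx]
      · have hp1 : w1.prod = (⟨0, 2 * ((q * n : ℕ) : ℤ) * d⟩ : Heis ω) := by
          rw [hw1prod, hwb1prod, hwa1prod, hlb, hla, HeisAux.pow_eq hω,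
            HeisAux.pow_eq hω, HeisAux.comm_eq hω]
          refine HeisAux.ext' rfl ?_
          show 2 * ω (q • b₁) (n • γ₀.fst) = 2 * ((q * n : ℕ) : ℤ) * d
          simp only [map_nsmul, LinearMap.smul_apply, nsmul_eq_mul]
          rw [← hd]
          push_cast
          ring
        have hp2 : w2.prod = (⟨0, 2 * (r : ℤ) * d⟩ : Heis ω) := by
          rw [hw2prod, hwb2prod, hla, hlb, HeisAux.pow_eq hω, HeisAux.comm_eq hω]
          refine HeisAux.ext' rfl ?_
          show 2 * ω (r • b₁) γ₀.fst = 2 * (r : ℤ) * d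
          simp only [map_nsmul, LinearMap.smul_apply, nsmul_eq_mul]
          rw [← hd]
          ring
        rw [List.prod_append, List.prod_append, hlγ, hp1, hp2]
        have hγ₀eta : γ₀ = (⟨γ₀.fst, γ₀.snd⟩ : Heis ω) := rfl
        rw [hγ₀eta, HeisAux.central_mul, HeisAux.central_mul, hκ]
        refine HeisAux.ext' rfl ?_
        show γ₀.snd + 2 * ((q * n : ℕ) : ℤ) * d + 2 * (r : ℤ) * d = γ₀.snd + 2 * (j : ℤ) * d
        have hj' : q * n + r = j := by
          rw [hq, hr, mul_comm]
          exact Nat.div_add_mod j n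
        have : ((q * n + r : ℕ) : ℤ) = (j : ℤ) := by rw [hj']
        push_cast at this
        rw [← this]
        push_cast
        ring
    have hκinj : Set.InjOn κ ↑(Finset.range (n ^ 2)) := by
      intro i _ j _ hij
      have h1 : γ₀.snd + 2 * (i : ℤ) * d = γ₀.snd + 2 * (j : ℤ) * d :=
        congrArg Heis.snd hij
      have h2 : (i : ℤ) = j := by
        have := mul_right_cancel₀ hdne (by linarith : 2 * (i : ℤ) * d = 2 * (j : ℤ) * d)
        omega
      exact_mod_cast h2
    have hsub : ↑((Finset.range (n ^ 2)).image κ)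
        ⊆ {γ : Heis ω | IsConj γ₀ γ} ∩ ball (c * n) := by
      intro γ hγ
      simp only [Finset.coe_image, Set.mem_image, Finset.mem_coe, Finset.mem_range] at hγ
      obtain ⟨j, hj, rfl⟩ := hγ
      exact ⟨hκconj j, hκball j hj⟩
    calc n ^ 2 = ((Finset.range (n ^ 2)).image κ).card := by
          rw [Finset.card_image_of_injOn hκinj, Finset.card_range]
      _ = (↑((Finset.range (n ^ 2)).image κ) : Set (Heis ω)).ncard :=
          (Set.ncard_coe_finset _).symm
      _ ≤ ({γ : Heis ω | IsConj γ₀ γ} ∩ ball (c * n)).ncard :=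
          Set.ncard_le_ncard hsub (Set.Finite.inter_of_right (hballfin _) _)
      _ = N (c * n) := (hN _).symm
  · -- upper bound
    rcases Nat.eq_zero_or_pos n with rfl | hn
    · have hempty : {γ : Heis ω | IsConj γ₀ γ} ∩ ball 0 = ∅ := by
        ext γ
        simp only [Set.mem_inter_iff, Set.mem_setOf_eq, Set.mem_empty_iff_false, iff_false,
          not_and]
        intro hconj hb
        rw [hball] at hb
        obtain ⟨l, hlen, -, hp⟩ := hb
        have hl : l = [] := List.eq_nil_of_length_eq_zero (Nat.le_zero.mp hlen)
        have : γ = 1 := by rw [← hp, hl]; rfl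
        exact hγ₀ (by rw [← hfst γ hconj, this]; rfl)
      rw [hN, hempty]
      simp
    set B : ℤ := ((n * M₂ + n * n * M : ℕ) : ℤ) with hBdef
    set F : Finset (Heis ω) := (Finset.Icc (-B) B).image fun z => (⟨γ₀.fst, z⟩ : Heis ω)
      with hFdef
    have hsub : {γ : Heis ω | IsConj γ₀ γ} ∩ ball n ⊆ ↑F := by
      rintro γ ⟨hconj, hb⟩
      rw [hball] at hb
      obtain ⟨l, hlen, hmem, hp⟩ := hb
      have hbound : (γ.snd).natAbs ≤ n * M₂ + n * n * M := by
        have h1 := HeisAux.prod_snd_bound M M₂ T hM hM₂ l hmem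
        rw [hp] at h1
        refine h1.trans ?_
        have h2 := Nat.mul_le_mul hlen hlen
        have h3 := Nat.mul_le_mul_right M₂ hlen
        have h4 := Nat.mul_le_mul_right M h2
        omega
      have hbound' : -B ≤ γ.snd ∧ γ.snd ≤ B := by
        rw [← abs_le, hBdef, Int.abs_eq_natAbs]
        exact_mod_cast hbound
      rw [hFdef]
      simp only [Finset.coe_image, Set.mem_image, Finset.mem_coe, Finset.mem_Icc]
      refine ⟨γ.snd, ⟨hbound'.1, hbound'.2⟩, ?_⟩
      have : γ = (⟨γ.fst, γ.snd⟩ : Heis ω) := rfl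
      rw [this, hfst γ hconj]
    have hFcard : F.card ≤ 2 * (n * M₂ + n * n * M) + 1 := by
      rw [hFdef]
      refine (Finset.card_image_le).trans ?_
      rw [Int.card_Icc, hBdef]
      omega
    have h1 : N n ≤ 2 * (n * M₂ + n * n * M) + 1 := by
      rw [hN]
      have step1 : ({γ : Heis ω | IsConj γ₀ γ} ∩ ball n).ncard ≤ F.card := by
        rw [← Set.ncard_coe_finset F]
        exact Set.ncard_le_ncard hsub F.finite_toSet
      exact step1.trans hFcard
    refine h1.trans ?_
    have hcge : 2 * M₂ + 2 * M + 2 ≤ c := by omega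
    have hnn : n ≤ n * n := Nat.le_mul_of_pos_left n hn
    have h1n : 1 ≤ n * n := by omega
    have h3 : (c * n) ^ 2 = c * c * (n * n) := by ring
    rw [h3]
    have h4 : (2 * M₂ + 2 * M + 2) * (n * n) ≤ c * c * (n * n) := by
      refine Nat.mul_le_mul_right _ (hcge.trans (Nat.le_mul_of_pos_left c hcpos))
    refine le_trans ?_ h4
    have e1 : 2 * (n * M₂) ≤ 2 * ((n * n) * M₂) :=
      Nat.mul_le_mul_left 2 (Nat.mul_le_mul_right M₂ hnn)
    have e2 : 1 ≤ 2 * (n * n) := h1n.trans (Nat.le_mul_of_pos_left (n * n) two_pos)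
    calc 2 * (n * M₂ + n * n * M) + 1
        = 2 * (n * M₂) + 2 * (n * n * M) + 1 := by ring
      _ ≤ 2 * ((n * n) * M₂) + 2 * (n * n * M) + 2 * (n * n) :=
          Nat.add_le_add (Nat.add_le_add e1 le_rfl) e2
      _ = (2 * M₂ + 2 * M + 2) * (n * n) := by ring
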